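/- (Example 1: closed-form asymptotic relative efficiency with a Gaussian residual.) Let Z be a Gaussian random variable with law N(0, τ²), τ > 0, and let ε be a random variable independent of Z with E[ε] = 0 and E[ε²] = σ_ε², where σ_ε² > 0. For β ≠ 0 set T₁ := Z·(βZ + ε) and T₂ := (βZ + ε)² − ε². Then E[T₁] = βτ², Var(T₁) = 2β²τ⁴ + σ_ε²τ², E[T₂] = β²τ², Var(T₂) = 2β⁴τ⁴ + 4σ_ε²β²τ², and consequently the asymptotic relative efficiency [Var(T₂)/(E[T₂])²] / [Var(T₁)/(E[T₁])²] = (4·σ_ε²/β² + 2τ²) / (σ_ε²/β² + 2τ²). -/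

import Mathlib

open MeasureTheory ProbabilityTheory

section AuxForARE
open MeasureTheory ProbabilityTheory Real Set
open scoped NNReal ENNReal

namespace AREaux

lemma integrable_pow_mul_exp (n : ℕ) {b : ℝ} (hb : 0 < b) :
    Integrable (fun x : ℝ => x ^ n * rexp (-b * x ^ 2)) := by
  have h : (-1 : ℝ) < n := lt_of_lt_of_le neg_one_lt_zero (Nat.cast_nonneg n)
  simpa [Real.rpow_natCast] using integrable_rpow_mul_exp_neg_mul_sq hb h

lemma integral_even_pow_mul_exp {b : ℝ} (hb : 0 < b) (n : ℕ) :
    ∫ x : ℝ, x ^ (2 * n) * rexp (-b * x ^ 2)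
      = b ^ (-(2 * (n : ℝ) + 1) / 2) * Real.Gamma ((2 * (n : ℝ) + 1) / 2) := by
  have h1 : (fun x : ℝ => x ^ (2 * n) * rexp (-b * x ^ 2))
      = fun x : ℝ => (fun t : ℝ => t ^ (2 * n) * rexp (-b * t ^ 2)) |x| := by
    ext x
    simp [pow_mul, sq_abs]
  rw [h1, integral_comp_abs (f := fun t : ℝ => t ^ (2 * n) * rexp (-b * t ^ 2))]
  have h2 : ∫ x in Ioi (0:ℝ), x ^ (2 * n) * rexp (-b * x ^ 2)
      = ∫ x in Ioi (0:ℝ), x ^ ((2 * n : ℕ) : ℝ) * rexp (-b * x ^ ((2:ℕ):ℝ)) := by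
    refine setIntegral_congr_fun measurableSet_Ioi fun x _ => ?_
    rw [Real.rpow_natCast, Real.rpow_natCast]
  rw [h2, integral_rpow_mul_exp_neg_mul_rpow (by norm_num) (lt_of_lt_of_le neg_one_lt_zero (Nat.cast_nonneg _)) hb]
  push_cast
  ring

lemma Gamma_three_halves : Real.Gamma (3 / 2) = Real.sqrt π / 2 := by
  have h : (3 / 2 : ℝ) = 1 / 2 + 1 := by norm_num
  rw [h, Real.Gamma_add_one (by norm_num), Real.Gamma_one_half_eq]
  ring

lemma Gamma_five_halves : Real.Gamma (5 / 2) = 3 * Real.sqrt π / 4 := by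
  have h : (5 / 2 : ℝ) = 3 / 2 + 1 := by norm_num
  rw [h, Real.Gamma_add_one (by norm_num), Gamma_three_halves]
  ring

lemma pdf_eq (v : ℝ≥0) (x : ℝ) :
    gaussianPDFReal 0 v x = (√(2 * π * (v:ℝ)))⁻¹ * rexp (-(2 * (v:ℝ))⁻¹ * x ^ 2) := by
  rw [gaussianPDFReal]
  congr 1
  rw [sub_zero]
  field_simp

lemma pdf_even (v : ℝ≥0) (x : ℝ) :
    gaussianPDFReal 0 v (-x) = gaussianPDFReal 0 v x := by
  rw [pdf_eq, pdf_eq, neg_pow, Even.neg_one_pow (by norm_num)]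
  ring_nf

lemma integrable_pow_mul_pdf (v : ℝ≥0) (hv : 0 < (v:ℝ)) (n : ℕ) :
    Integrable (fun x : ℝ => x ^ n * gaussianPDFReal 0 v x) := by
  have hb : (0:ℝ) < (2 * (v:ℝ))⁻¹ := by positivity
  have h := (integrable_pow_mul_exp n hb).const_mul (√(2 * π * (v:ℝ)))⁻¹
  refine h.congr (Filter.Eventually.of_forall fun x => ?_)
  simp only [pdf_eq]
  ring

lemma integral_odd_eq_zero (f : ℝ → ℝ) (hf : ∀ x, f (-x) = - f x) :
    ∫ x : ℝ, f x = 0 := by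
  have A : ∫ x : ℝ, f (-x) = ∫ x : ℝ, f x := by
    conv_rhs => rw [← Measure.map_neg_eq_self (volume : Measure ℝ)]
    exact ((Homeomorph.neg ℝ).measurableEmbedding.integral_map f).symm
  simp_rw [hf, integral_neg] at A
  linarith

lemma mom1 (v : ℝ≥0) : ∫ x : ℝ, x * gaussianPDFReal 0 v x = 0 := by
  refine integral_odd_eq_zero _ fun x => ?_
  rw [pdf_even]
  ring

lemma mom3 (v : ℝ≥0) : ∫ x : ℝ, x ^ 3 * gaussianPDFReal 0 v x = 0 := by
  refine integral_odd_eq_zero _ fun x => ?_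
  rw [pdf_even, Odd.neg_pow ⟨1, by norm_num⟩]
  ring

lemma mom2 (v : ℝ≥0) (hv : 0 < (v:ℝ)) :
    ∫ x : ℝ, x ^ 2 * gaussianPDFReal 0 v x = v := by
  set w : ℝ := (v:ℝ) with hw
  have hb : (0:ℝ) < (2 * w)⁻¹ := by positivity
  have h2w : (0:ℝ) < 2 * w := by positivity
  have key : ∫ x : ℝ, x ^ 2 * gaussianPDFReal 0 v x
      = (√(2 * π * w))⁻¹ * ∫ x : ℝ, x ^ (2 * 1) * rexp (-(2 * w)⁻¹ * x ^ 2) := by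
    rw [← integral_const_mul]
    congr 1; ext x
    rw [pdf_eq]
    ring_nf
    rfl
  rw [key, integral_even_pow_mul_exp hb 1]
  push_cast
  have e1 : ((2 * w)⁻¹ : ℝ) ^ (-(2 * (1:ℝ) + 1) / 2) = (2*w) * (2*w) ^ ((1:ℝ)/2) := by
    rw [Real.inv_rpow h2w.le, ← Real.rpow_neg h2w.le,
      show (-(-(2 * (1:ℝ) + 1) / 2)) = 1 + (1:ℝ)/2 by norm_num,
      Real.rpow_add h2w, Real.rpow_one]
  have e2 : Real.Gamma ((2 * (1:ℝ) + 1) / 2) = π ^ ((1:ℝ)/2) / 2 := by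
    rw [show ((2 * (1:ℝ) + 1) / 2) = 3/2 by norm_num, Gamma_three_halves,
      Real.sqrt_eq_rpow]
  have e3 : √(2 * π * w) = (2*w) ^ ((1:ℝ)/2) * π ^ ((1:ℝ)/2) := by
    rw [show 2 * π * w = (2*w) * π by ring, Real.sqrt_eq_rpow,
      Real.mul_rpow h2w.le pi_pos.le]
  rw [e1, e2, e3]
  have n1 : ((2*w) ^ ((1:ℝ)/2)) ≠ 0 := by positivity
  have n2 : (π ^ ((1:ℝ)/2)) ≠ 0 := by positivity
  field_simp

lemma mom4 (v : ℝ≥0) (hv : 0 < (v:ℝ)) :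
    ∫ x : ℝ, x ^ 4 * gaussianPDFReal 0 v x = 3 * (v:ℝ) ^ 2 := by
  set w : ℝ := (v:ℝ) with hw
  have hb : (0:ℝ) < (2 * w)⁻¹ := by positivity
  have h2w : (0:ℝ) < 2 * w := by positivity
  have key : ∫ x : ℝ, x ^ 4 * gaussianPDFReal 0 v x
      = (√(2 * π * w))⁻¹ * ∫ x : ℝ, x ^ (2 * 2) * rexp (-(2 * w)⁻¹ * x ^ 2) := by
    rw [← integral_const_mul]
    congr 1; ext x
    rw [pdf_eq]
    ring_nf
    rfl
  rw [key, integral_even_pow_mul_exp hb 2]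
  push_cast
  have e1 : ((2 * w)⁻¹ : ℝ) ^ (-(2 * (2:ℝ) + 1) / 2) = (2*w)^2 * (2*w) ^ ((1:ℝ)/2) := by
    rw [Real.inv_rpow h2w.le, ← Real.rpow_neg h2w.le,
      show (-(-(2 * (2:ℝ) + 1) / 2)) = 2 + (1:ℝ)/2 by norm_num,
      Real.rpow_add h2w, Real.rpow_two]
  have e2 : Real.Gamma ((2 * (2:ℝ) + 1) / 2) = 3 * π ^ ((1:ℝ)/2) / 4 := by
    rw [show ((2 * (2:ℝ) + 1) / 2) = 5/2 by norm_num, Gamma_five_halves,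
      Real.sqrt_eq_rpow]
  have e3 : √(2 * π * w) = (2*w) ^ ((1:ℝ)/2) * π ^ ((1:ℝ)/2) := by
    rw [show 2 * π * w = (2*w) * π by ring, Real.sqrt_eq_rpow,
      Real.mul_rpow h2w.le pi_pos.le]
  rw [e1, e2, e3]
  have n1 : ((2*w) ^ ((1:ℝ)/2)) ≠ 0 := by positivity
  have n2 : (π ^ ((1:ℝ)/2)) ≠ 0 := by positivity
  field_simp
  ring



lemma integral_gaussianReal_eq (v : ℝ≥0) (hv : v ≠ 0) (g : ℝ → ℝ) :
    ∫ x, g x ∂(gaussianReal 0 v) = ∫ x, g x * gaussianPDFReal 0 v x := by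
  rw [gaussianReal_of_var_ne_zero _ hv]
  have hd : gaussianPDF 0 v = fun x => ((gaussianPDFReal 0 v x).toNNReal : ℝ≥0∞) := rfl
  rw [hd, integral_withDensity_eq_integral_smul
    (measurable_gaussianPDFReal 0 v).real_toNNReal g]
  congr 1; ext x
  rw [NNReal.smul_def, smul_eq_mul, Real.coe_toNNReal _ (gaussianPDFReal_nonneg 0 v x),
    mul_comm]

lemma integrable_gaussianReal (v : ℝ≥0) (hv : v ≠ 0) {g : ℝ → ℝ}
    (h : Integrable (fun x => g x * gaussianPDFReal 0 v x)) :
    Integrable g (gaussianReal 0 v) := by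
  rw [gaussianReal_of_var_ne_zero _ hv]
  have hd : gaussianPDF 0 v = fun x => ((gaussianPDFReal 0 v x).toNNReal : ℝ≥0∞) := rfl
  rw [hd, integrable_withDensity_iff_integrable_smul
    (measurable_gaussianPDFReal 0 v).real_toNNReal]
  refine h.congr (Filter.Eventually.of_forall fun x => ?_)
  simp only [NNReal.smul_def, smul_eq_mul, Real.coe_toNNReal _ (gaussianPDFReal_nonneg 0 v x)]
  ring

end AREaux

end AuxForARE

open AREaux in
/-- Example 1: closed-form asymptotic relative efficiency with a Gaussian residual
`Z ∼ N(0, τ²)`, for the GCM statistic `T₁ = Z(βZ + ε)` and the LOCO statistic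
`T₂ = (βZ + ε)² − ε²`. -/
theorem are_gaussian_example
    {Ω : Type*} {mΩ : MeasurableSpace Ω} {P : Measure Ω} [IsProbabilityMeasure P]
    (Z ε : Ω → ℝ) (τ σε2 β : ℝ)
    (hτ : 0 < τ) (hσε2 : 0 < σε2) (hβ : β ≠ 0)
    (hZ : Measurable Z) (hεmeas : Measurable ε)
    (hZlaw : Measure.map Z P = gaussianReal 0 (⟨τ ^ 2, sq_nonneg τ⟩ : NNReal))
    (hindep : IndepFun Z ε P)
    (hε0 : ∫ ω, ε ω ∂P = 0) (hε2mem : MemLp ε 2 P)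
    (hε2 : ∫ ω, (ε ω) ^ 2 ∂P = σε2)
    (T₁ T₂ : Ω → ℝ)
    (hT₁ : T₁ = fun ω => Z ω * (β * Z ω + ε ω))
    (hT₂ : T₂ = fun ω => (β * Z ω + ε ω) ^ 2 - (ε ω) ^ 2) :
    (∫ ω, T₁ ω ∂P) = β * τ ^ 2
    ∧ variance T₁ P = 2 * β ^ 2 * τ ^ 4 + σε2 * τ ^ 2
    ∧ (∫ ω, T₂ ω ∂P) = β ^ 2 * τ ^ 2
    ∧ variance T₂ P = 2 * β ^ 4 * τ ^ 4 + 4 * σε2 * β ^ 2 * τ ^ 2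
    ∧ (variance T₂ P / (∫ ω, T₂ ω ∂P) ^ 2) / (variance T₁ P / (∫ ω, T₁ ω ∂P) ^ 2)
        = (4 * σε2 / β ^ 2 + 2 * τ ^ 2) / (σε2 / β ^ 2 + 2 * τ ^ 2) := by
  set v : NNReal := (⟨τ ^ 2, sq_nonneg τ⟩ : NNReal) with hvdef
  have hvR : (v : ℝ) = τ ^ 2 := rfl
  have hvpos : 0 < (v : ℝ) := by rw [hvR]; positivity
  have hv : v ≠ 0 := by
    intro h
    rw [h] at hvpos
    simp at hvpos
  -- transfer of moments of Z
  have comp_int : ∀ n : ℕ, Integrable (fun ω => Z ω ^ n) P := by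
    intro n
    have hg : Measurable fun x : ℝ => x ^ n := measurable_id.pow_const n
    have h1 : Integrable (fun x : ℝ => x ^ n) (gaussianReal 0 v) :=
      integrable_gaussianReal v hv (integrable_pow_mul_pdf v hvpos n)
    rw [← hZlaw] at h1
    exact (integrable_map_measure hg.aestronglyMeasurable hZ.aemeasurable).mp h1
  have comp_eq : ∀ n : ℕ, ∫ ω, Z ω ^ n ∂P = ∫ x, x ^ n * gaussianPDFReal 0 v x := by
    intro n
    have hg : Measurable fun x : ℝ => x ^ n := measurable_id.pow_const n
    rw [← integral_map hZ.aemeasurable hg.aestronglyMeasurable, hZlaw,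
      integral_gaussianReal_eq v hv]
  have IZ1 : Integrable Z P := by simpa using comp_int 1
  have IZ2 : Integrable (fun ω => Z ω ^ 2) P := comp_int 2
  have IZ3 : Integrable (fun ω => Z ω ^ 3) P := comp_int 3
  have IZ4 : Integrable (fun ω => Z ω ^ 4) P := comp_int 4
  have EZ1 : ∫ ω, Z ω ∂P = 0 := by
    have h := comp_eq 1
    simp only [pow_one] at h
    rw [h, mom1 v]
  have EZ2 : ∫ ω, Z ω ^ 2 ∂P = τ ^ 2 := by rw [comp_eq 2, mom2 v hvpos, hvR]
  have EZ3 : ∫ ω, Z ω ^ 3 ∂P = 0 := by rw [comp_eq 3, mom3 v]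
  have EZ4 : ∫ ω, Z ω ^ 4 ∂P = 3 * τ ^ 4 := by
    rw [comp_eq 4, mom4 v hvpos, hvR]
    ring
  -- ε integrability
  have Iε : Integrable ε P := hε2mem.integrable one_le_two
  have Iε2 : Integrable (fun ω => ε ω ^ 2) P := hε2mem.integrable_sq
  -- independence of powers
  have ind : ∀ a b : ℕ, IndepFun (fun ω => Z ω ^ a) (fun ω => ε ω ^ b) P := fun a b =>
    hindep.comp (measurable_id.pow_const a) (measurable_id.pow_const b)
  -- mixed moments
  have IZε : Integrable (fun ω => Z ω * ε ω) P := by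
    have h := hindep.integrable_mul IZ1 Iε
    exact h
  have EZε : ∫ ω, Z ω * ε ω ∂P = 0 := by
    have h := hindep.integral_fun_mul_eq_mul_integral IZ1.aestronglyMeasurable Iε.aestronglyMeasurable
    rw [EZ1, zero_mul] at h
    exact h
  have ind31 : IndepFun (fun ω => Z ω ^ 3) ε P :=
    hindep.comp (measurable_id.pow_const 3) measurable_id
  have IZ3ε : Integrable (fun ω => Z ω ^ 3 * ε ω) P := by
    have h := ind31.integrable_mul IZ3 Iε
    exact h
  have EZ3ε : ∫ ω, Z ω ^ 3 * ε ω ∂P = 0 := by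
    have h := ind31.integral_fun_mul_eq_mul_integral IZ3.aestronglyMeasurable Iε.aestronglyMeasurable
    rw [EZ3, zero_mul] at h
    exact h
  have ind22 : IndepFun (fun ω => Z ω ^ 2) (fun ω => ε ω ^ 2) P := ind 2 2
  have IZ2ε2 : Integrable (fun ω => Z ω ^ 2 * ε ω ^ 2) P := by
    have h := ind22.integrable_mul IZ2 Iε2
    exact h
  have EZ2ε2 : ∫ ω, Z ω ^ 2 * ε ω ^ 2 ∂P = τ ^ 2 * σε2 := by
    have h := ind22.integral_fun_mul_eq_mul_integral IZ2.aestronglyMeasurable Iε2.aestronglyMeasurable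
    rw [EZ2, hε2] at h
    exact h
  -- T₁ first moment
  have hT₁fun : T₁ = fun ω => β * Z ω ^ 2 + Z ω * ε ω := by
    rw [hT₁]; funext ω; ring
  have ET₁ : ∫ ω, T₁ ω ∂P = β * τ ^ 2 := by
    rw [hT₁fun, integral_add (IZ2.const_mul β) IZε, integral_const_mul, EZ2, EZε, add_zero]
  -- T₁ second moment
  have hT₁sq : (fun ω => T₁ ω ^ 2)
      = fun ω => (β ^ 2 * Z ω ^ 4 + 2 * β * (Z ω ^ 3 * ε ω)) + Z ω ^ 2 * ε ω ^ 2 := by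
    rw [hT₁]; funext ω; ring
  have IT₁sq : Integrable (fun ω => T₁ ω ^ 2) P := by
    rw [hT₁sq]
    exact ((IZ4.const_mul (β ^ 2)).add (IZ3ε.const_mul (2 * β))).add IZ2ε2
  have IA1 : Integrable (fun ω => β ^ 2 * Z ω ^ 4 + 2 * β * (Z ω ^ 3 * ε ω)) P :=
    (IZ4.const_mul (β ^ 2)).add (IZ3ε.const_mul (2 * β))
  have ET₁sq : ∫ ω, T₁ ω ^ 2 ∂P = 3 * β ^ 2 * τ ^ 4 + τ ^ 2 * σε2 := by
    rw [hT₁sq, integral_add IA1 IZ2ε2,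
      integral_add (IZ4.const_mul (β ^ 2)) (IZ3ε.const_mul (2 * β)),
      integral_const_mul, integral_const_mul, EZ4, EZ3ε, EZ2ε2]
    ring
  have hT₁meas : Measurable T₁ := by
    rw [hT₁]; exact hZ.mul ((hZ.const_mul β).add hεmeas)
  have hT₁mem : MemLp T₁ 2 P :=
    (memLp_two_iff_integrable_sq hT₁meas.aestronglyMeasurable).mpr IT₁sq
  have VT₁ : variance T₁ P = 2 * β ^ 2 * τ ^ 4 + σε2 * τ ^ 2 := by
    rw [variance_eq_sub hT₁mem]
    simp only [Pi.pow_apply]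
    rw [ET₁sq, ET₁]
    ring
  -- T₂ moments
  have hT₂fun : T₂ = fun ω => β ^ 2 * Z ω ^ 2 + 2 * β * (Z ω * ε ω) := by
    rw [hT₂]; funext ω; ring
  have ET₂ : ∫ ω, T₂ ω ∂P = β ^ 2 * τ ^ 2 := by
    rw [hT₂fun, integral_add (IZ2.const_mul (β ^ 2)) (IZε.const_mul (2 * β)),
      integral_const_mul, integral_const_mul, EZ2, EZε]
    ring
  have hT₂sq : (fun ω => T₂ ω ^ 2)
      = fun ω => (β ^ 4 * Z ω ^ 4 + 4 * β ^ 3 * (Z ω ^ 3 * ε ω))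
          + 4 * β ^ 2 * (Z ω ^ 2 * ε ω ^ 2) := by
    rw [hT₂]; funext ω; ring
  have IT₂sq : Integrable (fun ω => T₂ ω ^ 2) P := by
    rw [hT₂sq]
    exact ((IZ4.const_mul (β ^ 4)).add (IZ3ε.const_mul (4 * β ^ 3))).add
      (IZ2ε2.const_mul (4 * β ^ 2))
  have IA2 : Integrable (fun ω => β ^ 4 * Z ω ^ 4 + 4 * β ^ 3 * (Z ω ^ 3 * ε ω)) P :=
    (IZ4.const_mul (β ^ 4)).add (IZ3ε.const_mul (4 * β ^ 3))
  have ET₂sq : ∫ ω, T₂ ω ^ 2 ∂P = 3 * β ^ 4 * τ ^ 4 + 4 * β ^ 2 * τ ^ 2 * σε2 := by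
    rw [hT₂sq, integral_add IA2 (IZ2ε2.const_mul (4 * β ^ 2)),
      integral_add (IZ4.const_mul (β ^ 4)) (IZ3ε.const_mul (4 * β ^ 3)),
      integral_const_mul, integral_const_mul, integral_const_mul, EZ4, EZ3ε, EZ2ε2]
    ring
  have hT₂meas : Measurable T₂ := by
    rw [hT₂]; exact (((hZ.const_mul β).add hεmeas).pow_const 2).sub (hεmeas.pow_const 2)
  have hT₂mem : MemLp T₂ 2 P :=
    (memLp_two_iff_integrable_sq hT₂meas.aestronglyMeasurable).mpr IT₂sq
  have VT₂ : variance T₂ P = 2 * β ^ 4 * τ ^ 4 + 4 * σε2 * β ^ 2 * τ ^ 2 := by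
    rw [variance_eq_sub hT₂mem]
    simp only [Pi.pow_apply]
    rw [ET₂sq, ET₂]
    ring
  refine ⟨ET₁, VT₁, ET₂, VT₂, ?_⟩
  rw [ET₁, VT₁, ET₂, VT₂]
  have hτ' : τ ≠ 0 := ne_of_gt hτ
  have h1 : 2 * β ^ 2 * τ ^ 4 + σε2 * τ ^ 2 ≠ 0 := by positivity
  have h2 : σε2 / β ^ 2 + 2 * τ ^ 2 ≠ 0 := by positivity
  field_simp
  ring
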